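/- For integers d,k,m ≥ 2 with d ≥ k, the number of collinear k-tuples of points in the grid [m]^d = {0,1,...,m-1}^d is O(m^{2d}), where the implicit constant may depend on d and k but not m. -/

import Mathlib

open Finset

namespace CT

def sNorm {d : ℕ} (w : Fin d → ℤ) : ℕ := Finset.univ.sup fun i => (w i).natAbs

noncomputable def Wset (d m : ℕ) : Finset (Fin d → ℤ) :=
  (Fintype.piFinset fun _ : Fin d => Finset.Icc (-((m:ℤ)-1)) ((m:ℤ)-1)).filter fun w => w ≠ 0

noncomputable def Cbox (k m : ℕ) {d : ℕ} (w : Fin d → ℤ) : Finset (Fin k → ℤ) :=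
  Fintype.piFinset fun j => if (j : ℕ) = 0 then {0} else
    Finset.Icc (-(((m-1)/ sNorm w : ℕ) : ℤ)) (((m-1)/ sNorm w : ℕ) : ℤ)

noncomputable def Tset (d k m : ℕ) : Finset ((Fin d → ℤ) × Σ _ : Fin d → ℤ, Fin k → ℤ) :=
  (Fintype.piFinset fun _ : Fin d => Finset.Ico (0:ℤ) (m:ℤ)) ×ˢ ((Wset d m).sigma fun w => Cbox k m w)

lemma card_Cbox (k m : ℕ) (hk : 1 ≤ k) {d : ℕ} (w : Fin d → ℤ) :
    (Cbox k m w).card = (2 * ((m-1)/ sNorm w) + 1) ^ (k - 1) := by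
  classical
  rw [Cbox, Fintype.card_piFinset]
  set j0 : Fin k := ⟨0, hk⟩ with hj0
  have h0 : j0 ∈ (univ : Finset (Fin k)) := mem_univ _
  rw [← Finset.prod_erase_mul _ _ h0]
  have : ((j0 : ℕ) = 0) := rfl
  rw [if_pos this]
  rw [Finset.prod_congr rfl (fun j hj => by
    have hne : j ≠ j0 := Finset.ne_of_mem_erase hj
    have : (j : ℕ) ≠ 0 := fun h => hne (Fin.ext h)
    rw [if_neg this])]
  rw [Finset.prod_const, Finset.card_singleton, mul_one, Finset.card_erase_of_mem h0,
    Finset.card_univ, Fintype.card_fin]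
  congr 1
  rw [Int.card_Icc]
  push_cast
  omega

lemma card_Tset (d k m : ℕ) :
    (Tset d k m).card = m ^ d * ∑ w ∈ Wset d m, (Cbox k m w).card := by
  rw [Tset, Finset.card_product, Finset.card_sigma, Fintype.card_piFinset]
  congr 1
  simp [Int.card_Ico]

lemma fiber_card (d m s : ℕ) (hd : 1 ≤ d) (hs : 1 ≤ s) :
    ((Wset d m).filter fun w => sNorm w = s).card ≤ 2 * d * (2*s+1)^(d-1) := by
  classical
  have hsub : ((Wset d m).filter fun w => sNorm w = s) ⊆
      Finset.univ.biUnion (fun i : Fin d => Fintype.piFinset fun j =>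
        if j = i then ({-(s:ℤ), (s:ℤ)} : Finset ℤ) else Finset.Icc (-(s:ℤ)) (s:ℤ)) := by
    intro w hw
    rw [Finset.mem_filter] at hw
    obtain ⟨hw1, hw2⟩ := hw
    obtain ⟨i, -, hi⟩ := Finset.exists_mem_eq_sup (univ : Finset (Fin d))
      (by
        have : Nonempty (Fin d) := ⟨⟨0, by omega⟩⟩
        exact univ_nonempty) (fun i => (w i).natAbs)
    rw [Finset.mem_biUnion]
    refine ⟨i, mem_univ _, ?_⟩
    rw [Fintype.mem_piFinset]
    intro j
    by_cases hj : j = i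
    · subst hj
      rw [if_pos rfl]
      have : (w j).natAbs = s := by rw [← hi, ← hw2]; rfl
      simp only [Finset.mem_insert, Finset.mem_singleton]
      omega
    · rw [if_neg hj]
      have : (w j).natAbs ≤ s := by
        rw [← hw2]
        exact Finset.le_sup (s := univ) (f := fun i => (w i).natAbs) (mem_univ j)
      rw [Finset.mem_Icc]
      omega
  refine (Finset.card_le_card hsub).trans ?_
  refine (Finset.card_biUnion_le).trans (le_of_eq ?_)
  have hcard : ∀ i : Fin d, (Fintype.piFinset fun j =>
      if j = i then ({-(s:ℤ), (s:ℤ)} : Finset ℤ) else Finset.Icc (-(s:ℤ)) (s:ℤ)).card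
      = 2 * (2*s+1)^(d-1) := by
    intro i
    rw [Fintype.card_piFinset, ← Finset.prod_erase_mul _ _ (mem_univ i), if_pos rfl]
    rw [Finset.prod_congr rfl (fun j hj => by rw [if_neg (Finset.ne_of_mem_erase hj)])]
    rw [Finset.prod_const, Finset.card_erase_of_mem (mem_univ i), Finset.card_univ,
      Fintype.card_fin]
    have h2 : ({-(s:ℤ), (s:ℤ)} : Finset ℤ).card = 2 := by
      rw [Finset.card_insert_of_notMem (by simp; omega), Finset.card_singleton]
    rw [h2, Int.card_Icc, mul_comm]
    congr 2
    omega
  calc ∑ i : Fin d, (Fintype.piFinset fun j =>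
      if j = i then ({-(s:ℤ), (s:ℤ)} : Finset ℤ) else Finset.Icc (-(s:ℤ)) (s:ℤ)).card
      = ∑ _i : Fin d, 2 * (2*s+1)^(d-1) := by
        exact Finset.sum_congr rfl fun i _ => hcard i
    _ = d * (2 * (2*s+1)^(d-1)) := by rw [Finset.sum_const, Finset.card_univ, Fintype.card_fin, smul_eq_mul]
    _ = 2 * d * (2*s+1)^(d-1) := by ring
lemma sNorm_mem (d m : ℕ) (w : Fin d → ℤ) (hw : w ∈ Wset d m) :
    sNorm w ∈ Finset.Icc 1 (m-1) := by
  rw [Wset, Finset.mem_filter, Fintype.mem_piFinset] at hw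
  obtain ⟨h1, h2⟩ := hw
  rw [Finset.mem_Icc]
  constructor
  · have : ∃ i, w i ≠ 0 := by
      by_contra h; push_neg at h; exact h2 (funext h)
    obtain ⟨i, hi⟩ := this
    have h1' : 1 ≤ (w i).natAbs := by omega
    exact h1'.trans (Finset.le_sup (s := univ) (f := fun i => (w i).natAbs) (mem_univ i))
  · apply Finset.sup_le
    intro i _
    have := h1 i
    rw [Finset.mem_Icc] at this
    omega

lemma sum_bound (d k m : ℕ) (hd : 1 ≤ d) (hk : 1 ≤ k) (hkd : k ≤ d) (hm : 2 ≤ m) :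
    ∑ w ∈ Wset d m, (2 * ((m-1)/ sNorm w) + 1) ^ (k - 1) ≤ 2*d*3^(d+k) * m ^ d := by
  classical
  rw [← Finset.sum_fiberwise_of_maps_to (sNorm_mem d m) _]
  have hterm : ∀ s ∈ Finset.Icc 1 (m-1),
      (∑ w ∈ (Wset d m).filter (fun w => sNorm w = s), (2 * ((m-1)/ sNorm w) + 1) ^ (k-1))
      ≤ 2*d*3^(d+k-2) * m^(d-1) := by
    intro s hs
    rw [Finset.mem_Icc] at hs
    obtain ⟨hs1, hs2⟩ := hs
    have hsm : s ≤ m := by omega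
    calc (∑ w ∈ (Wset d m).filter (fun w => sNorm w = s), (2 * ((m-1)/ sNorm w) + 1) ^ (k-1))
        = ∑ _w ∈ (Wset d m).filter (fun w => sNorm w = s), (2 * ((m-1)/ s) + 1) ^ (k-1) :=
          Finset.sum_congr rfl fun w hw => by rw [(Finset.mem_filter.mp hw).2]
      _ = ((Wset d m).filter (fun w => sNorm w = s)).card * (2 * ((m-1)/ s) + 1) ^ (k-1) := by
          rw [Finset.sum_const, smul_eq_mul]
      _ ≤ (2 * d * (2*s+1)^(d-1)) * (2 * ((m-1)/ s) + 1) ^ (k-1) :=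
          Nat.mul_le_mul_right _ (fiber_card d m s hd hs1)
      _ ≤ (2 * d * (3*s)^(d-1)) * (3 * (m / s)) ^ (k-1) := by
          apply Nat.mul_le_mul
          · exact Nat.mul_le_mul_left _ (Nat.pow_le_pow_left (by omega) _)
          · apply Nat.pow_le_pow_left
            have h1 : (m-1)/s ≤ m/s := Nat.div_le_div_right (by omega)
            have h2 : 1 ≤ m/s := (Nat.one_le_div_iff (by omega)).mpr hsm
            omega
      _ = (2*d) * 3^(d-1) * 3^(k-1) * (s^(d-k) * (s^(k-1) * (m/s)^(k-1))) := by
          rw [mul_pow, mul_pow]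
          have : d - 1 = (d - k) + (k - 1) := by omega
          rw [this, pow_add]
          ring
      _ ≤ (2*d) * 3^(d-1) * 3^(k-1) * (m^(d-k) * m^(k-1)) := by
          apply Nat.mul_le_mul_left
          apply Nat.mul_le_mul
          · exact Nat.pow_le_pow_left hsm _
          · rw [← mul_pow]
            apply Nat.pow_le_pow_left
            rw [mul_comm]
            exact Nat.div_mul_le_self m s
      _ = 2*d*3^(d+k-2) * m^(d-1) := by
          rw [show (m:ℕ)^(d-k)*m^(k-1) = m^(d-1) from by rw [← pow_add]; congr 1; omega,
            show (2*d*3^(d-1)*3^(k-1):ℕ) = 2*d*3^(d+k-2) from by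
              rw [show d+k-2 = (d-1)+(k-1) by omega, pow_add]; ring]
  calc (∑ s ∈ Finset.Icc 1 (m-1), ∑ w ∈ (Wset d m).filter (fun w => sNorm w = s),
          (2 * ((m-1)/ sNorm w) + 1) ^ (k-1))
      ≤ ∑ _s ∈ Finset.Icc 1 (m-1), 2*d*3^(d+k-2) * m^(d-1) := Finset.sum_le_sum hterm
    _ = (m-1) * (2*d*3^(d+k-2) * m^(d-1)) := by
        rw [Finset.sum_const, smul_eq_mul, Nat.card_Icc]
        congr 1
    _ ≤ m * (2*d*3^(d+k-2) * m^(d-1)) := Nat.mul_le_mul_right _ (by omega)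
    _ = 2*d*3^(d+k-2) * m^d := by
        rw [show (m:ℕ)^d = m * m^(d-1) from by rw [← pow_succ']; congr 1; omega]
        ring
    _ ≤ 2*d*3^(d+k) * m^d := by
        apply Nat.mul_le_mul_right
        apply Nat.mul_le_mul_left
        exact Nat.pow_le_pow_right (by omega) (by omega)
lemma exists_rep (d k m : ℕ) (hk : 2 ≤ k) (hkd : k ≤ d) (hm : 2 ≤ m)
    (f : Fin k → Fin d → ℤ) (hinj : Function.Injective f)
    (hb : ∀ j i, 0 ≤ f j i ∧ f j i < (m : ℤ))
    (hcol : Collinear ℝ (Set.range (fun j => fun i => ((f j i : ℝ))))) :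
    ∃ y : (Fin d → ℤ) × Σ _ : Fin d → ℤ, Fin k → ℤ,
      y ∈ Tset d k m ∧ ∀ j i, f j i = y.1 i + (y.2.2 j) * (y.2.1 i) := by
  classical
  haveI : NeZero k := ⟨by omega⟩
  haveI : Nonempty (Fin d) := ⟨⟨0, by omega⟩⟩
  have h01 : (0 : Fin k) ≠ 1 := by
    intro hh
    have h2 := congrArg Fin.val hh
    rw [Fin.val_zero, show ((1 : Fin k) : ℕ) = 1 % k from rfl,
      Nat.mod_eq_of_lt (by omega)] at h2
    omega
  set v : Fin d → ℤ := fun i => f 1 i - f 0 i with hv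
  have hvne : v ≠ 0 := by
    intro h
    apply h01
    apply hinj
    funext i
    have := congrFun h i
    simp only [hv, Pi.zero_apply] at this
    omega
  set g : ℤ := Finset.univ.gcd v with hg
  have hgne : g ≠ 0 := by
    intro h
    apply hvne
    funext i
    exact (Finset.gcd_eq_zero_iff.mp (hg ▸ h)) i (mem_univ i)
  obtain ⟨w, hvw, hw1⟩ := Finset.extract_gcd v (univ_nonempty (α := Fin d))
  have hvwi : ∀ i, v i = g * w i := fun i => hvw i (mem_univ i)
  obtain ⟨i0, hwi0⟩ : ∃ i0, w i0 ≠ 0 := by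
    by_contra h
    push_neg at h
    have h0 : Finset.univ.gcd w = 0 := Finset.gcd_eq_zero_iff.mpr fun i _ => h i
    rw [h0] at hw1
    exact zero_ne_one hw1
  -- collinearity gives real ratios
  set F : Fin k → Fin d → ℝ := fun j => fun i => ((f j i : ℝ)) with hF
  rw [collinear_iff_of_mem (Set.mem_range_self (f := F) 0)] at hcol
  obtain ⟨u, hu⟩ := hcol
  have hr : ∀ j, ∃ r : ℝ, ∀ i, F j i - F 0 i = r * u i := by
    intro j
    obtain ⟨r, hrr⟩ := hu (F j) (Set.mem_range_self j)
    refine ⟨r, fun i => ?_⟩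
    have h2 := congrFun hrr i
    simp only [Pi.vadd_apply, vadd_eq_add, Pi.add_apply, Pi.smul_apply, smul_eq_mul] at h2
    rw [h2]
    ring
  obtain ⟨r1, hr1⟩ := hr 1
  -- cross products over ℤ with v
  have hcrossv : ∀ j i i', (f j i - f 0 i) * v i' = (f j i' - f 0 i') * v i := by
    intro j i i'
    obtain ⟨r, hrj⟩ := hr j
    have e1 : ∀ i, ((f j i - f 0 i : ℤ) : ℝ) = r * u i := by
      intro i; push_cast; exact hrj i
    have ev : ∀ i, ((v i : ℤ) : ℝ) = r1 * u i := by
      intro i; rw [hv]; push_cast; exact hr1 i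
    have hcast : ((f j i - f 0 i : ℤ) : ℝ) * ((v i' : ℤ) : ℝ)
        = ((f j i' - f 0 i' : ℤ) : ℝ) * ((v i : ℤ) : ℝ) := by
      rw [e1 i, e1 i', ev i, ev i']; ring
    exact_mod_cast hcast
  -- cross products with w
  have hcross : ∀ j i i', (f j i - f 0 i) * w i' = (f j i' - f 0 i') * w i := by
    intro j i i'
    have h2 := hcrossv j i i'
    rw [hvwi i, hvwi i'] at h2
    apply mul_left_cancel₀ hgne
    linear_combination h2
  -- integrality
  have hCex : ∀ j, ∃ c : ℤ, ∀ i, f j i - f 0 i = c * w i := by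
    intro j
    have h1 : ∀ i, w i0 ∣ (f j i0 - f 0 i0) * w i := fun i =>
      ⟨f j i - f 0 i, by linear_combination hcross j i0 i⟩
    have h2 : w i0 ∣ Finset.univ.gcd (fun i => (f j i0 - f 0 i0) * w i) :=
      Finset.dvd_gcd fun i _ => h1 i
    rw [Finset.gcd_mul_left, hw1, mul_one] at h2
    obtain ⟨c, hc⟩ := dvd_normalize_iff.mp h2
    refine ⟨c, fun i => ?_⟩
    apply mul_right_cancel₀ hwi0
    rw [hcross j i i0, hc]
    ring
  choose C hC using hCex
  have hC0 : C 0 = 0 := by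
    have := hC 0 i0
    simp only [sub_self] at this
    rcases mul_eq_zero.mp this.symm with h | h
    · exact h
    · exact absurd h hwi0
  -- bounds on w
  have habs : ∀ i, w i ∈ Finset.Icc (-((m:ℤ)-1)) ((m:ℤ)-1) := by
    intro i
    rw [Finset.mem_Icc]
    have hb1 := hb 1 i
    have hb0 := hb 0 i
    have hvi : -((m:ℤ)-1) ≤ v i ∧ v i ≤ (m:ℤ)-1 := by
      constructor <;> [skip; skip] <;> simp only [hv] <;> omega
    have := hvwi i
    have hg1 : 1 ≤ |g| := Int.one_le_abs hgne
    have : |w i| ≤ |v i| := by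
      calc |w i| = 1 * |w i| := (one_mul _).symm
        _ ≤ |g| * |w i| := by
            apply mul_le_mul_of_nonneg_right hg1 (abs_nonneg _)
        _ = |g * w i| := (abs_mul g (w i)).symm
        _ = |v i| := by rw [← hvwi i]
    have h2 : |v i| ≤ (m:ℤ)-1 := abs_le.mpr ⟨hvi.1, hvi.2⟩
    have h3 := this.trans h2
    rw [abs_le] at h3
    exact ⟨h3.1, h3.2⟩
  have hWmem : w ∈ Wset d m := by
    rw [Wset, Finset.mem_filter, Fintype.mem_piFinset]
    exact ⟨fun i => habs i, fun h => hwi0 (by rw [h]; rfl)⟩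
  -- bounds on C
  have hs1 : 1 ≤ sNorm w := by
    have : 1 ≤ (w i0).natAbs := by omega
    exact this.trans (Finset.le_sup (s := univ) (f := fun i => (w i).natAbs) (mem_univ i0))
  obtain ⟨i1, -, hi1⟩ := Finset.exists_mem_eq_sup (univ : Finset (Fin d))
    univ_nonempty (fun i => (w i).natAbs)
  have hCmem : C ∈ Cbox k m w := by
    rw [Cbox, Fintype.mem_piFinset]
    intro j
    by_cases hj : (j : ℕ) = 0
    · rw [if_pos hj]
      have : j = 0 := Fin.ext hj
      rw [this, hC0]
      exact Finset.mem_singleton_self 0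
    · rw [if_neg hj]
      rw [Finset.mem_Icc]
      have hCj := hC j i1
      have hb1 := hb j i1
      have hb0 := hb 0 i1
      have hbound : (C j).natAbs * (w i1).natAbs ≤ m - 1 := by
        have : ((C j) * (w i1)).natAbs = (f j i1 - f 0 i1).natAbs := by rw [← hCj]
        rw [Int.natAbs_mul] at this
        omega
      rw [← hi1] at hbound
      have hdiv : (C j).natAbs ≤ (m-1) / sNorm w := by
        rw [Nat.le_div_iff_mul_le (by omega : 0 < sNorm w)]
        exact hbound
      constructor <;> omega
  refine ⟨(f 0, ⟨w, C⟩), ?_, ?_⟩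
  · rw [Tset, Finset.mem_product, Finset.mem_sigma]
    refine ⟨?_, hWmem, hCmem⟩
    rw [Fintype.mem_piFinset]
    intro i
    rw [Finset.mem_Ico]
    exact hb 0 i
  · intro j i
    have h2 := hC j i
    show f j i = f 0 i + C j * w i
    omega

lemma main_nat (d k m : ℕ) (hk : 2 ≤ k) (hkd : k ≤ d) (hm : 2 ≤ m) :
    Nat.card {f : Fin k → (Fin d → ℤ) // Function.Injective f ∧
      (∀ j i, 0 ≤ f j i ∧ f j i < (m : ℤ)) ∧
      Collinear ℝ (Set.range (fun j => fun i => ((f j i : ℝ))))}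
      ≤ 2*d*3^(d+k) * m^(2*d) := by
  classical
  have hd : 1 ≤ d := by omega
  have hrep : ∀ x : {f : Fin k → (Fin d → ℤ) // Function.Injective f ∧
      (∀ j i, 0 ≤ f j i ∧ f j i < (m : ℤ)) ∧
      Collinear ℝ (Set.range (fun j => fun i => ((f j i : ℝ))))},
      ∃ y : (Fin d → ℤ) × Σ _ : Fin d → ℤ, Fin k → ℤ,
        y ∈ Tset d k m ∧ ∀ j i, x.1 j i = y.1 i + (y.2.2 j) * (y.2.1 i) :=
    fun x => exists_rep d k m hk hkd hm x.1 x.2.1 x.2.2.1 x.2.2.2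
  choose Φ hΦmem hΦrec using hrep
  have hinj : Function.Injective
      (fun x => (⟨Φ x, hΦmem x⟩ : {y // y ∈ Tset d k m})) := by
    intro x x' h
    simp only [Subtype.mk.injEq] at h
    apply Subtype.ext
    funext j i
    rw [hΦrec x j i, hΦrec x' j i, h]
  have hcard := Nat.card_le_card_of_injective _ hinj
  rw [Nat.card_eq_finsetCard] at hcard
  refine hcard.trans ?_
  rw [card_Tset]
  have hsum : (∑ w ∈ Wset d m, (Cbox k m w).card)
      = ∑ w ∈ Wset d m, (2 * ((m-1)/ sNorm w) + 1) ^ (k - 1) :=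
    Finset.sum_congr rfl fun w _ => card_Cbox k m (le_trans one_le_two hk) w
  rw [hsum]
  calc m ^ d * ∑ w ∈ Wset d m, (2 * ((m-1)/ sNorm w) + 1) ^ (k - 1)
      ≤ m ^ d * (2*d*3^(d+k) * m ^ d) :=
        Nat.mul_le_mul_left _ (sum_bound d k m hd (le_trans one_le_two hk) hkd hm)
    _ = 2*d*3^(d+k) * m^(2*d) := by rw [two_mul, pow_add]; ring

end CT

/-- Number of collinear `k`-tuples (ordered tuples of distinct points on a common
line) in the grid `[m]^d`. -/
noncomputable def collinearTuples (d k m : ℕ) : ℕ :=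
  Nat.card {f : Fin k → (Fin d → ℤ) // Function.Injective f ∧
    (∀ j i, 0 ≤ f j i ∧ f j i < (m : ℤ)) ∧
    Collinear ℝ (Set.range (fun j => fun i => ((f j i : ℝ))))}

/-- For `2 ≤ k ≤ d`, the number of collinear `k`-tuples in `[m]^d` is `O(m^{2d})`. -/
theorem stmt0 (d k : ℕ) (hk : 2 ≤ k) (hkd : k ≤ d) :
    ∃ C : ℝ, 0 < C ∧ ∀ m : ℕ, 2 ≤ m →
      (collinearTuples d k m : ℝ) ≤ C * (m : ℝ) ^ (2 * d) := by
  refine ⟨((2*d*3^(d+k) : ℕ) : ℝ), ?_, ?_⟩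
  · have h : (0:ℕ) < 2*d*3^(d+k) := by
      have hd : 0 < d := by omega
      positivity
    exact_mod_cast h
  · intro m hm
    have h := CT.main_nat d k m hk hkd hm
    calc (collinearTuples d k m : ℝ)
        ≤ ((2*d*3^(d+k) * m^(2*d) : ℕ) : ℝ) := Nat.cast_le.mpr h
      _ = ((2*d*3^(d+k) : ℕ) : ℝ) * (m : ℝ) ^ (2*d) := by push_cast; ring
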